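/- Let M be an atomic cancellative commutative monoid and suppose λ = 1 + sup{ℓ(x) : x ∈ M nonunit} is finite, where ℓ(x) is the minimum factorization length of x. If k ∈ Δ(M), then there exists z ∈ M and integers r ≤ λ − k and k' ≥ k such that L(z) ∩ {r, r+1, ..., r+k'} = {r, r+k'}. -/
import Mathlib


/-- An irreducible of a commutative monoid M: a nonunit not expressible as a product of
two nonunits. -/
def MIrred {M : Type*} [CommMonoid M] (z : M) : Prop :=
  ¬IsUnit z ∧ ∀ a b : M, ¬IsUnit a → ¬IsUnit b → z ≠ a * b

/-- The set of factorization lengths of z into irreducibles. -/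
def MLSet {M : Type*} [CommMonoid M] (z : M) : Set ℕ :=
  {r | ∃ l : Multiset M, Multiset.card l = r ∧ (∀ a ∈ l, MIrred a) ∧ l.prod = z}

/-- The Delta set of z: differences of successive factorization lengths. -/
def MDelta {M : Type*} [CommMonoid M] (z : M) : Set ℕ :=
  {d | ∃ a b, a ∈ MLSet z ∧ b ∈ MLSet z ∧ a < b ∧
    (∀ c, a < c → c < b → c ∉ MLSet z) ∧ d = b - a}

lemma prod_not_isUnit_aux {M : Type*} [CommMonoid M] (l : Multiset M) (hne : l ≠ 0)
    (h : ∀ a ∈ l, MIrred a) : ¬IsUnit l.prod := by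
  obtain ⟨a, ha⟩ := Multiset.exists_mem_of_ne_zero hne
  obtain ⟨m, rfl⟩ := Multiset.exists_cons_of_mem ha
  rw [Multiset.prod_cons]
  intro hu
  exact (h a (Multiset.mem_cons_self a m)).1 (isUnit_of_mul_isUnit_left hu)

theorem stmt14 {M : Type*} [CancelCommMonoid M]
    (hatomic : ∀ x : M, ¬IsUnit x → ∃ r : ℕ, r ∈ MLSet x)
    (hbdd : BddAbove {r : ℕ | ∃ x : M, ¬IsUnit x ∧ IsLeast (MLSet x) r})
    (lam : ℕ)
    (hlam : lam = 1 + sSup {r : ℕ | ∃ x : M, ¬IsUnit x ∧ IsLeast (MLSet x) r})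
    (k : ℕ) (hk : ∃ z : M, ¬IsUnit z ∧ k ∈ MDelta z) :
    ∃ (z : M) (r k' : ℕ), ¬IsUnit z ∧ r ≤ lam - k ∧ k ≤ k' ∧
      MLSet z ∩ Set.Icc r (r + k') = {r, r + k'} := by
  obtain ⟨z0, hz0, a, b, ha, hb, hab, hgap, hk'⟩ := hk
  have hkpos : 0 < k := by omega
  set S := {s : ℕ | ∃ z : M, ¬IsUnit z ∧ s ∈ MLSet z ∧
    (∀ c ∈ MLSet z, s < c → s + k ≤ c) ∧ ∃ t ∈ MLSet z, s < t} with hSdef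
  have hSa : a ∈ S := by
    refine ⟨z0, hz0, ha, fun c hc hlt => ?_, b, hb, hab⟩
    by_contra h
    exact hgap c hlt (by omega) hc
  set s := sInf S with hs
  obtain ⟨z, hz, hsz, hnogap, t1, ht1, hst1⟩ : s ∈ S := Nat.sInf_mem ⟨a, hSa⟩
  have hspos : 0 < s := by
    rcases Nat.eq_zero_or_pos s with h0 | h
    · exfalso
      obtain ⟨l0, hc0, -, hp0⟩ := hsz
      rw [h0, Multiset.card_eq_zero] at hc0
      rw [hc0, Multiset.prod_zero] at hp0
      exact hz (hp0 ▸ isUnit_one)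
    · exact h
  -- t0 : least length of z greater than s
  have hT0ne : (MLSet z ∩ Set.Ioi s).Nonempty := ⟨t1, ht1, hst1⟩
  set t0 := sInf (MLSet z ∩ Set.Ioi s) with ht0
  have hmemT0 := Nat.sInf_mem hT0ne
  have ht0z : t0 ∈ MLSet z := hmemT0.1
  have ht0s : s < t0 := hmemT0.2
  have ht0s' : s < t0 := ht0s
  have ht0k : s + k ≤ t0 := hnogap t0 ht0z ht0s'
  set d := t0 - s with hd
  have hdk : k ≤ d := by omega
  have ht0eq : t0 = s + d := by omega
  -- factorization of z of length t0
  obtain ⟨l, hlcard, hlatom, hlprod⟩ := id ht0z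
  -- split into first s+k-1 atoms and the rest
  set l1 : Multiset M := ↑(l.toList.take (s + k - 1)) with hl1
  set l2 : Multiset M := ↑(l.toList.drop (s + k - 1)) with hl2
  have hlen : l.toList.length = t0 := by
    rw [← hlcard]; exact (Multiset.length_toList l).symm ▸ rfl
  have hsplit : l1 + l2 = l := by
    have h1 : l1 + l2 = ((l.toList.take (s + k - 1) ++ l.toList.drop (s + k - 1) : List M) :
        Multiset M) := rfl
    rw [h1, List.take_append_drop, Multiset.coe_toList]
  have hl1card : Multiset.card l1 = s + k - 1 := by
    rw [hl1, Multiset.coe_card, List.length_take, hlen]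
    omega
  have hl2card : Multiset.card l2 = d + 1 - k := by
    have := congrArg Multiset.card hsplit
    rw [Multiset.card_add, hl1card, hlcard] at this
    omega
  have hl1atom : ∀ x ∈ l1, MIrred x := fun x hx =>
    hlatom x (hsplit ▸ Multiset.mem_add.mpr (Or.inl hx))
  have hl2atom : ∀ x ∈ l2, MIrred x := fun x hx =>
    hlatom x (hsplit ▸ Multiset.mem_add.mpr (Or.inr hx))
  set w := l1.prod with hw
  have hzw : z = w * l2.prod := by
    rw [hw, ← Multiset.prod_add, hsplit, hlprod]
  have hwlen : s + k - 1 ∈ MLSet w := ⟨l1, hl1card, hl1atom, rfl⟩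
  have hwnu : ¬IsUnit w := by
    apply prod_not_isUnit_aux l1 _ hl1atom
    intro h0
    rw [h0] at hl1card
    simp at hl1card
    omega
  -- key claim: any short length of w is very short
  have claim1 : ∀ t ∈ MLSet w, t < s + k - 1 → t + d + 1 ≤ s + k := by
    intro t ⟨m, hmcard, hmatom, hmprod⟩ htlt
    have hu : t + (d + 1 - k) ∈ MLSet z := by
      refine ⟨m + l2, ?_, ?_, ?_⟩
      · rw [Multiset.card_add, hmcard, hl2card]
      · intro x hx
        rcases Multiset.mem_add.mp hx with h | h
        · exact hmatom x h
        · exact hl2atom x h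
      · rw [Multiset.prod_add, hmprod, ← hzw]
    by_contra hcon
    have hgt : s < t + (d + 1 - k) := by omega
    have := Nat.sInf_le (Set.mem_inter hu (Set.mem_Ioi.mpr hgt))
    rw [← ht0] at this
    omega
  -- s + k - 1 is the least length of w
  have hleast : IsLeast (MLSet w) (s + k - 1) := by
    refine ⟨hwlen, fun t ht => ?_⟩
    by_contra hcon
    push_neg at hcon
    have htT : t ∈ MLSet w ∧ t + d + 1 ≤ s + k := ⟨ht, claim1 t ht (by omega)⟩
    set T := {u : ℕ | u ∈ MLSet w ∧ u + d + 1 ≤ s + k} with hT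
    have hTbdd : BddAbove T := ⟨s + k, fun u hu => by obtain ⟨-, h2⟩ := hu; omega⟩
    set ts := sSup T with hts
    obtain ⟨htsw, htsle⟩ : ts ∈ T := Nat.sSup_mem ⟨t, htT⟩ hTbdd
    have htsS : ts ∈ S := by
      refine ⟨w, hwnu, htsw, fun c hc hltc => ?_, s + k - 1, hwlen, by omega⟩
      by_contra hck
      push_neg at hck
      have hcsmall : c < s + k - 1 := by omega
      have : c ∈ T := ⟨hc, claim1 c hc hcsmall⟩
      have := le_csSup hTbdd this
      omega
    have := Nat.sInf_le htsS
    rw [← hs] at this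
    omega
  -- hence s + k - 1 ≤ sSup, so s ≤ lam - k
  have hmem : s + k - 1 ∈ {r : ℕ | ∃ x : M, ¬IsUnit x ∧ IsLeast (MLSet x) r} :=
    ⟨w, hwnu, hleast⟩
  have hsup := le_csSup hbdd hmem
  have hslam : s ≤ lam - k := by omega
  refine ⟨z, s, d, hz, hslam, hdk, ?_⟩
  ext c
  simp only [Set.mem_inter_iff, Set.mem_Icc, Set.mem_insert_iff, Set.mem_singleton_iff]
  constructor
  · rintro ⟨hc, hc1, hc2⟩
    rcases eq_or_lt_of_le hc1 with h | h
    · exact Or.inl h.symm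
    · right
      have : t0 ≤ c := Nat.sInf_le (Set.mem_inter hc (Set.mem_Ioi.mpr h))
      omega
  · rintro (rfl | rfl)
    · exact ⟨hsz, le_refl _, by omega⟩
    · exact ⟨ht0eq ▸ ht0z, by omega, le_refl _⟩
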